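/- For every integer t ≥ 1 and every i with 1 ≤ i ≤ t, one has α_t^i ≤ 2H/t; in particular max_{1 ≤ i ≤ t} α_t^i ≤ 2H/t. -/

import Mathlib

/-- Learning rate `α_t = (H+1)/(H+t)`. -/
noncomputable def lr (H : ℕ) (t : ℕ) : ℝ := ((H : ℝ) + 1) / ((H : ℝ) + t)

/-- Weights `α_t^0 = ∏_{j=1}^t (1 - α_j)` and `α_t^i = α_i ∏_{j=i+1}^t (1 - α_j)` for `i ≥ 1`. -/
noncomputable def alphaW (H : ℕ) (t i : ℕ) : ℝ :=
  if i = 0 then ∏ j ∈ Finset.Icc 1 t, (1 - lr H j)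
  else lr H i * ∏ j ∈ Finset.Icc (i + 1) t, (1 - lr H j)

lemma lr_nonneg (H j : ℕ) : 0 ≤ lr H j := by
  unfold lr; positivity

lemma one_sub_lr_nonneg (H j : ℕ) (hj : 1 ≤ j) : 0 ≤ 1 - lr H j := by
  unfold lr
  rw [sub_nonneg]
  apply div_le_one_of_le₀
  · have : (1:ℝ) ≤ (j:ℝ) := by exact_mod_cast hj
    linarith
  · positivity

lemma prod_one_sub_lr_nonneg (H a b : ℕ) (ha : 1 ≤ a) :
    0 ≤ ∏ j ∈ Finset.Icc a b, (1 - lr H j) := by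
  apply Finset.prod_nonneg
  intro j hj
  exact one_sub_lr_nonneg H j (le_trans ha (Finset.mem_Icc.mp hj).1)

lemma lr_key (H i : ℕ) (hi : 1 ≤ i) :
    lr H i * (1 - lr H (i + 1)) ≤ lr H (i + 1) := by
  unfold lr
  have hi' : (1:ℝ) ≤ (i:ℝ) := by exact_mod_cast hi
  have hH : (0:ℝ) ≤ (H:ℝ) := Nat.cast_nonneg H
  push_cast
  have h1 : (0:ℝ) < (H:ℝ) + i := by linarith
  have h2 : (0:ℝ) < (H:ℝ) + (i + 1) := by linarith
  have e : 1 - ((H:ℝ) + 1) / ((H:ℝ) + (i + 1)) = (i:ℝ) / ((H:ℝ) + (i + 1)) := by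
    field_simp
    ring
  rw [e, div_mul_div_comm, div_le_div_iff₀ (by positivity) h2]
  nlinarith [mul_nonneg (mul_nonneg (show (0:ℝ) ≤ (H:ℝ)+1 by linarith) h2.le) hH]

lemma alphaW_step (H t i : ℕ) (hi : 1 ≤ i) (hit : i < t) :
    alphaW H t i ≤ alphaW H t (i + 1) := by
  unfold alphaW
  rw [if_neg (by omega), if_neg (by omega)]
  have hsplit : Finset.Icc (i + 1) t = insert (i + 1) (Finset.Icc (i + 2) t) := by
    ext x
    simp only [Finset.mem_Icc, Finset.mem_insert]
    omega
  rw [hsplit, Finset.prod_insert (by simp [Finset.mem_Icc])]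
  have hP : 0 ≤ ∏ j ∈ Finset.Icc (i + 2) t, (1 - lr H j) :=
    prod_one_sub_lr_nonneg H (i + 2) t (by omega)
  calc lr H i * ((1 - lr H (i + 1)) * ∏ j ∈ Finset.Icc (i + 2) t, (1 - lr H j))
      = (lr H i * (1 - lr H (i + 1))) * ∏ j ∈ Finset.Icc (i + 2) t, (1 - lr H j) := by ring
    _ ≤ lr H (i + 1) * ∏ j ∈ Finset.Icc (i + 2) t, (1 - lr H j) :=
        mul_le_mul_of_nonneg_right (lr_key H i hi) hP

/-- `α_t^i ≤ 2H/t` for all `1 ≤ i ≤ t`. -/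
theorem alphaW_le (H : ℕ) (hH : 1 ≤ H) (t : ℕ) (ht : 1 ≤ t) :
    ∀ i : ℕ, 1 ≤ i → i ≤ t → alphaW H t i ≤ 2 * (H : ℝ) / t := by
  have hend : alphaW H t t = lr H t := by
    unfold alphaW
    rw [if_neg (by omega), Finset.Icc_eq_empty (by omega), Finset.prod_empty, mul_one]
  have hmono : ∀ k i : ℕ, 1 ≤ i → i + k = t → alphaW H t i ≤ alphaW H t t := by
    intro k
    induction k with
    | zero => intro i hi hik; simp_all
    | succ n ih =>
      intro i hi hik
      have h1 : alphaW H t i ≤ alphaW H t (i + 1) := alphaW_step H t i hi (by omega)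
      exact h1.trans (ih (i + 1) (by omega) (by omega))
  have hfin : lr H t ≤ 2 * (H : ℝ) / t := by
    unfold lr
    have ht' : (1:ℝ) ≤ (t:ℝ) := by exact_mod_cast ht
    have hH' : (1:ℝ) ≤ (H:ℝ) := by exact_mod_cast hH
    rw [div_le_div_iff₀ (by linarith) (by linarith)]
    nlinarith
  intro i hi hit
  exact le_trans (le_trans (hmono (t - i) i hi (by omega)) hend.le) hfin
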